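/- arXiv:2210.13375 — 3 statements merged into one kernel-verified Lean document; each statement's English description precedes it below -/
import Mathlib

section
/- For letters x_1 < x_2 < ... < x_p < y < z_1 < ... < z_q in a totally ordered alphabet, the words y(x_1...x_p)(z_1...z_q) and y(z_1...z_q)(x_1...x_p) are congruent modulo the stylic congruence. -/
noncomputable section

open FreeMonoid

/-- The defining relations of the stylic congruence: the Knuth (plactic)
relations together with the idempotent relations `a² ≡ a`. -/
inductive StylicRel (A : Type*) [LinearOrder A] : FreeMonoid A → FreeMonoid A → Prop
  | knuth1 {a b c : A} : a < b → b < c →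
      StylicRel A (ofList [b, a, c]) (ofList [b, c, a])
  | knuth2 {a b c : A} : a < b → b < c →
      StylicRel A (ofList [a, c, b]) (ofList [c, a, b])
  | knuth3 {a b : A} : a < b →
      StylicRel A (ofList [b, a, b]) (ofList [b, b, a])
  | knuth4 {a b : A} : a < b →
      StylicRel A (ofList [a, b, a]) (ofList [b, a, a])
  | idem (a : A) : StylicRel A (ofList [a, a]) (ofList [a])

/-- The stylic congruence on the free monoid `A*`. -/
def stylCon (A : Type*) [LinearOrder A] : Con (FreeMonoid A) := conGen (StylicRel A)

/-- The stylic monoid `Styl(A)`. -/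
abbrev Styl (A : Type*) [LinearOrder A] := (stylCon A).Quotient

section Aux

variable {A : Type*} [LinearOrder A]

private lemma styl_base {u v : FreeMonoid A} (h : StylicRel A u v) : stylCon A u v :=
  ConGen.Rel.of _ _ h

private lemma styl_ctx (l r : List A) {u v : List A}
    (h : stylCon A (ofList u) (ofList v)) :
    stylCon A (ofList (l ++ u ++ r)) (ofList (l ++ v ++ r)) := by
  simpa [ofList_append, mul_assoc] using
    (stylCon A).mul ((stylCon A).mul ((stylCon A).refl (ofList l)) h)
      ((stylCon A).refl (ofList r))

/-- Core lemma: for letters in `X` all `< w < z`, `wXz ≡ wzX`. -/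
private lemma styl_L (w z : A) (hwz : w < z) :
    ∀ X : List A, (∀ a ∈ X, a < w) →
    stylCon A (ofList (w :: (X ++ [z]))) (ofList (w :: z :: X)) := by
  intro X
  induction X with
  | nil => intro _; exact (stylCon A).refl _
  | cons x1 X' ih =>
    intro hX
    have hx1 : x1 < w := hX x1 (by simp)
    have hX' : ∀ a ∈ X', a < w := fun a ha => hX a (by simp [ha])
    have s1 : stylCon A (ofList (w :: (x1 :: X' ++ [z])))
        (ofList (w :: w :: (x1 :: X' ++ [z]))) := by
      simpa using styl_ctx [] (x1 :: X' ++ [z])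
        ((stylCon A).symm (styl_base (StylicRel.idem w)))
    have s2 : stylCon A (ofList (w :: w :: (x1 :: X' ++ [z])))
        (ofList (w :: x1 :: w :: (X' ++ [z]))) := by
      simpa using styl_ctx [] (X' ++ [z])
        ((stylCon A).symm (styl_base (StylicRel.knuth3 hx1)))
    have s3 : stylCon A (ofList (w :: x1 :: w :: (X' ++ [z])))
        (ofList (w :: x1 :: w :: z :: X')) := by
      simpa using styl_ctx [w, x1] [] (ih hX')
    have s4 : stylCon A (ofList (w :: x1 :: w :: z :: X'))
        (ofList (w :: w :: x1 :: z :: X')) := by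
      simpa using styl_ctx [] (z :: X') (styl_base (StylicRel.knuth3 hx1))
    have s5 : stylCon A (ofList (w :: w :: x1 :: z :: X'))
        (ofList (w :: x1 :: z :: X')) := by
      simpa using styl_ctx [] (x1 :: z :: X') (styl_base (StylicRel.idem w))
    have s6 : stylCon A (ofList (w :: x1 :: z :: X'))
        (ofList (w :: z :: x1 :: X')) := by
      simpa using styl_ctx [] X' (styl_base (StylicRel.knuth1 hx1 hwz))
    exact ((((s1.trans s2).trans s3).trans s4).trans s5).trans s6

/-- For letters in `X` all `< w` and letters in `Z` all `> w`, with `Z`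
strictly increasing, `wXZ ≡ wZX`. -/
private lemma styl_M :
    ∀ (Z : List A) (w : A) (X : List A), (∀ a ∈ X, a < w) → (∀ b ∈ Z, w < b) →
    Z.Pairwise (· < ·) →
    stylCon A (ofList (w :: (X ++ Z))) (ofList (w :: (Z ++ X))) := by
  intro Z
  induction Z with
  | nil => intro w X _ _ _; simp; exact (stylCon A).refl _
  | cons z1 Z' ih =>
    intro w X hX hZ hs
    obtain ⟨hz1Z', hs'⟩ := List.pairwise_cons.mp hs
    have hwz1 : w < z1 := hZ z1 (by simp)
    have s1 : stylCon A (ofList (w :: (X ++ z1 :: Z')))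
        (ofList (w :: z1 :: (X ++ Z'))) := by
      have h := styl_ctx [] Z' (styl_L w z1 hwz1 X hX)
      simpa using h
    have s2 : stylCon A (ofList (w :: z1 :: (X ++ Z')))
        (ofList (w :: z1 :: (Z' ++ X))) := by
      have h := styl_ctx [w] []
        (ih z1 X (fun a ha => lt_trans (hX a ha) hwz1) hz1Z' hs')
      simpa using h
    simpa using (stylCon A).trans s1 s2

end Aux

/-- Lemma `superplax`, second identity: for letters
`x₁ < ⋯ < x_p < y < z₁ < ⋯ < z_q`, the words `y(x₁⋯x_p)(z₁⋯z_q)` and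
`y(z₁⋯z_q)(x₁⋯x_p)` are stylically congruent. -/
theorem stylic_superplax_right {A : Type*} [LinearOrder A] {p q : ℕ}
    (hp : 1 ≤ p) (hq : 1 ≤ q) (x : Fin p → A) (z : Fin q → A) (y : A)
    (hx : StrictMono x) (hz : StrictMono z)
    (hxy : ∀ i, x i < y) (hyz : ∀ j, y < z j) :
    stylCon A (ofList ([y] ++ List.ofFn x ++ List.ofFn z))
      (ofList ([y] ++ List.ofFn z ++ List.ofFn x)) := by
  have hX : ∀ a ∈ List.ofFn x, a < y := by
    intro a ha
    obtain ⟨i, rfl⟩ := List.mem_ofFn.mp ha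
    exact hxy i
  have hZ : ∀ b ∈ List.ofFn z, y < b := by
    intro b hb
    obtain ⟨j, rfl⟩ := List.mem_ofFn.mp hb
    exact hyz j
  have hs : (List.ofFn z).Pairwise (· < ·) := List.pairwise_ofFn.mpr (fun _ _ h => hz h)
  simpa using styl_M (List.ofFn z) y (List.ofFn x) hX hZ hs
end
end

section
/- Every strictly decreasing word over a totally ordered alphabet is idempotent in the stylic monoid. -/
noncomputable section

open FreeMonoid

lemma stylCon_of {A : Type*} [LinearOrder A] {x y : FreeMonoid A}
    (h : StylicRel A x y) : stylCon A x y :=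
  ConGen.Rel.of x y h

/-- Key moving lemma: a big letter `a` can be moved leftwards past a strictly
decreasing word `v` all of whose letters are below `m < a`. -/
lemma styl_move {A : Type*} [LinearOrder A] (a : A) :
    ∀ (v : List A) (m : A), m < a → v.Chain' (· > ·) → (∀ x ∈ v, x < m) →
      stylCon A (ofList (m :: (v ++ [a]))) (ofList (m :: a :: v))
  | [], m, _, _, _ => (stylCon A).refl _
  | s :: w, m, hma, hch, hlt => by
    have hsm : s < m := hlt s List.mem_cons_self
    have hws : ∀ x ∈ w, x < s := by
      have := (List.isChain_iff_pairwise.mp hch)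
      exact fun x hx => (List.pairwise_cons.mp this).1 x hx
    have ih : stylCon A (ofList (s :: (w ++ [a]))) (ofList (s :: a :: w)) :=
      styl_move a w s (hsm.trans hma) hch.tail hws
    have step1 : stylCon A (ofList (m :: s :: (w ++ [a]))) (ofList (m :: s :: a :: w)) := by
      have := (stylCon A).mul ((stylCon A).refl (of m)) ih
      simpa [ofList_append, ofList_cons, ofList_singleton, mul_assoc] using this
    have step2 : stylCon A (ofList (m :: s :: a :: w)) (ofList (m :: a :: s :: w)) := by
      have hrel : stylCon A (ofList [m, s, a]) (ofList [m, a, s]) :=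
        stylCon_of (StylicRel.knuth1 hsm hma)
      have := (stylCon A).mul hrel ((stylCon A).refl (ofList w))
      simpa [ofList_append, ofList_cons, ofList_singleton, mul_assoc] using this
    exact (stylCon A).trans (by simpa using step1) step2

lemma styl_front {A : Type*} [LinearOrder A] (a : A) (v : List A)
    (hch : v.Chain' (· > ·)) (hlt : ∀ x ∈ v, x < a) :
    stylCon A (ofList (a :: (v ++ [a]))) (ofList (a :: a :: v)) := by
  cases v with
  | nil => exact (stylCon A).refl _
  | cons y w =>
    have hya : y < a := hlt y List.mem_cons_self
    have hwy : ∀ x ∈ w, x < y := by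
      have := (List.isChain_iff_pairwise.mp hch)
      exact fun x hx => (List.pairwise_cons.mp this).1 x hx
    have step1 : stylCon A (ofList (a :: y :: (w ++ [a]))) (ofList (a :: y :: a :: w)) := by
      have := (stylCon A).mul ((stylCon A).refl (of a)) (styl_move a w y hya hch.tail hwy)
      simpa [ofList_append, ofList_cons, ofList_singleton, mul_assoc] using this
    have step2 : stylCon A (ofList (a :: y :: a :: w)) (ofList (a :: a :: y :: w)) := by
      have hrel : stylCon A (ofList [a, y, a]) (ofList [a, a, y]) :=
        stylCon_of (StylicRel.knuth3 hya)
      have := (stylCon A).mul hrel ((stylCon A).refl (ofList w))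
      simpa [ofList_append, ofList_cons, ofList_singleton, mul_assoc] using this
    exact (stylCon A).trans step1 step2

lemma styl_sq {A : Type*} [LinearOrder A] :
    ∀ (l : List A), l.Chain' (· > ·) →
      stylCon A (ofList (l ++ l)) (ofList l)
  | [], _ => (stylCon A).refl _
  | a :: v, h => by
    have hva : ∀ x ∈ v, x < a := by
      have := (List.isChain_iff_pairwise.mp h)
      exact fun x hx => (List.pairwise_cons.mp this).1 x hx
    have ih : stylCon A (ofList (v ++ v)) (ofList v) := styl_sq v h.tail
    have step1 : stylCon A (ofList ((a :: v) ++ (a :: v))) (ofList ((a :: a :: v) ++ v)) := by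
      have := (stylCon A).mul (styl_front a v h.tail hva) ((stylCon A).refl (ofList v))
      simpa [ofList_append, ofList_cons, ofList_singleton, mul_assoc] using this
    have step2 : stylCon A (ofList ((a :: a :: v) ++ v)) (ofList (a :: (v ++ v))) := by
      have hrel : stylCon A (ofList [a, a]) (ofList [a]) :=
        stylCon_of (StylicRel.idem a)
      have := (stylCon A).mul hrel ((stylCon A).refl (ofList (v ++ v)))
      simpa [ofList_append, ofList_cons, ofList_singleton, mul_assoc] using this
    have step3 : stylCon A (ofList (a :: (v ++ v))) (ofList (a :: v)) := by
      have := (stylCon A).mul ((stylCon A).refl (of a)) ih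
      simpa [ofList_append, ofList_cons, ofList_singleton, mul_assoc] using this
    exact (stylCon A).trans ((stylCon A).trans step1 step2) step3

/-- every strictly decreasing word is idempotent in the
stylic monoid. -/
theorem styl_decreasing_word_idempotent {A : Type*} [LinearOrder A]
    (l : List A) (hl : l.Chain' (· > ·)) :
    (stylCon A).mk' (ofList l) * (stylCon A).mk' (ofList l) =
      (stylCon A).mk' (ofList l) := by
  rw [← map_mul, ← ofList_append]
  exact (stylCon A).eq.mpr (styl_sq l hl)
end
end

section
/- For every word w and every column γ over A, there exists a word u such that γw ≡_styl u·(γ·w), where γ on the left denotes the decreasing word of the column γ and γ·w is the result of the right action of w on γ. -/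
noncomputable section

open FreeMonoid

/-- Right action of a letter `c` on a column `γ`: if `c < min γ` then
`γ ∪ {c}`; otherwise replace `max {x ∈ γ : x ≤ c}` (the bumped letter) by `c`. -/
def rIns {A : Type*} [LinearOrder A] (γ : Finset A) (c : A) : Finset A :=
  if h : (γ.filter (· ≤ c)).Nonempty then
    insert c (γ.erase ((γ.filter (· ≤ c)).max' h))
  else insert c γ

/-- Schensted left column insertion of a letter `b` into a column `δ`:
if `b > max δ` then `δ ∪ {b}`; otherwise replace `min {x ∈ δ : x ≥ b}`
(the bumped letter) by `b`. -/
def lIns {A : Type*} [LinearOrder A] (b : A) (δ : Finset A) : Finset A :=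
  if h : (δ.filter (b ≤ ·)).Nonempty then
    insert b (δ.erase ((δ.filter (b ≤ ·)).min' h))
  else insert b δ

/-- The right action of a word on a column, `γ·(uv) = (γ·u)·v`. -/
def rActW {A : Type*} [LinearOrder A] (γ : Finset A) (w : List A) : Finset A :=
  w.foldl rIns γ

/-- The left action of a word on a column, `(uv)·γ = u·(v·γ)`. -/
def lActW {A : Type*} [LinearOrder A] (w : List A) (γ : Finset A) : Finset A :=
  w.foldr lIns γ

/-- The strictly decreasing word of a column `γ ⊆ A`. -/
def decWord {A : Type*} [LinearOrder A] (γ : Finset A) : List A :=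
  (γ.sort (· ≤ ·)).reverse

section Aux

variable {A : Type*} [LinearOrder A]

lemma styl_of {x y : FreeMonoid A} (h : StylicRel A x y) : stylCon A x y :=
  ConGen.Rel.of _ _ h

lemma styl_mul_left (t : List A) {a b : List A}
    (h : stylCon A (ofList a) (ofList b)) :
    stylCon A (ofList (t ++ a)) (ofList (t ++ b)) := by
  rw [ofList_append, ofList_append]
  exact (stylCon A).mul ((stylCon A).refl _) h

lemma styl_mul_right (t : List A) {a b : List A}
    (h : stylCon A (ofList a) (ofList b)) :
    stylCon A (ofList (a ++ t)) (ofList (b ++ t)) := by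
  rw [ofList_append, ofList_append]
  exact (stylCon A).mul h ((stylCon A).refl _)

lemma swap1 {q y c : A} (h1 : q < y) (h2 : y ≤ c) :
    stylCon A (ofList [y, q, c]) (ofList [y, c, q]) := by
  rcases h2.lt_or_eq with h | rfl
  · exact styl_of (StylicRel.knuth1 h1 h)
  · exact styl_of (StylicRel.knuth3 h1)

lemma swap2 {m y x : A} (h1 : m ≤ y) (h2 : y < x) :
    stylCon A (ofList [x, m, y]) (ofList [m, x, y]) := by
  rcases h1.lt_or_eq with h | rfl
  · exact ((stylCon A).symm (styl_of (StylicRel.knuth2 h h2)))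
  · exact ((stylCon A).symm (styl_of (StylicRel.knuth4 h2)))

lemma moveC {m c : A} (Q : List A) (hQ : List.Pairwise (· > ·) (m :: Q)) (hmc : m ≤ c) :
    stylCon A (ofList (m :: (Q ++ [c]))) (ofList (m :: c :: Q)) := by
  induction Q generalizing m with
  | nil => exact (stylCon A).refl _
  | cons q Q' ih =>
    have hqm : q < m := (List.pairwise_cons.1 hQ).1 q (by simp)
    have h1 : stylCon A (ofList (m :: (q :: Q' ++ [c]))) (ofList (m :: q :: c :: Q')) := by
      have := ih (m := q) (List.pairwise_cons.1 hQ).2 (le_trans hqm.le hmc)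
      simpa using styl_mul_left [m] this
    have h2 : stylCon A (ofList ([m, q, c] ++ Q')) (ofList ([m, c, q] ++ Q')) :=
      styl_mul_right Q' (swap1 hqm hmc)
    simp only [List.cons_append, List.nil_append] at h1 h2 ⊢
    exact (stylCon A).trans h1 h2

lemma moveM {m y : A} (P rest : List A) (hP : List.Pairwise (· > ·) (P ++ [y]))
    (hmy : m ≤ y) :
    stylCon A (ofList (P ++ m :: y :: rest)) (ofList (m :: (P ++ y :: rest))) := by
  induction P with
  | nil => exact (stylCon A).refl _
  | cons p P' ih =>
    have hc := List.pairwise_cons.1 (show List.Pairwise (· > ·) (p :: (P' ++ [y])) from hP)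
    have hP' : List.Pairwise (· > ·) (P' ++ [y]) := hc.2
    obtain ⟨z, t, hzt⟩ : ∃ z t, P' ++ [y] = z :: t := by
      cases P' with
      | nil => exact ⟨y, [], rfl⟩
      | cons a b => exact ⟨a, b ++ [y], rfl⟩
    have hz1 : m ≤ z := by
      have hy : y = z ∨ y ∈ t := by
        have : y ∈ z :: t := hzt ▸ (by simp)
        simpa using this
      rcases hy with h | h
      · exact h ▸ hmy
      · exact hmy.trans ((List.pairwise_cons.1 (hzt ▸ hP')).1 y h).le
    have hz2 : z < p := hc.1 z (by rw [hzt]; simp)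
    have key : P' ++ y :: rest = z :: (t ++ rest) := by
      have h0 : P' ++ y :: rest = (P' ++ [y]) ++ rest := by simp
      rw [h0, hzt]; rfl
    have h1 : stylCon A (ofList (p :: (P' ++ m :: y :: rest)))
        (ofList (p :: m :: (P' ++ y :: rest))) :=
      styl_mul_left [p] (ih hP')
    have h2 : stylCon A (ofList ([p, m, z] ++ (t ++ rest)))
        (ofList ([m, p, z] ++ (t ++ rest))) :=
      styl_mul_right _ (swap2 hz1 hz2)
    have e1 : (p :: m :: (P' ++ y :: rest) : List A) = [p, m, z] ++ (t ++ rest) := by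
      rw [key]; rfl
    have e2 : (m :: (p :: P' ++ y :: rest) : List A) = [m, p, z] ++ (t ++ rest) := by
      rw [show (p :: P' ++ y :: rest : List A) = p :: (P' ++ y :: rest) from rfl, key]; rfl
    rw [← e1, ← e2] at h2
    exact (stylCon A).trans h1 h2


end Aux

section Ins
variable {A : Type*} [LinearOrder A]

lemma sorted_reverse_gt {l : List A} (h : l.Pairwise (· < ·)) :
    l.reverse.Pairwise (· > ·) := by
  simpa [List.pairwise_reverse] using h

lemma le_getLast_of_sorted {l : List A} (hs : l.Pairwise (· ≤ ·)) {x : A}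
    (hx : x ∈ l) (h : l ≠ []) : x ≤ l.getLast h := by
  have e := List.dropLast_append_getLast h
  rw [← e] at hs hx
  rcases List.mem_append.1 hx with h1 | h1
  · exact (List.pairwise_append.1 hs).2.2 x h1 _ (by simp)
  · simp only [List.mem_singleton] at h1
    exact h1 ▸ le_refl _

lemma insert_step (γ : Finset A) (c : A) :
    ∃ u : List A,
      stylCon A (ofList (decWord γ ++ [c])) (ofList (u ++ decWord (rIns γ c))) := by
  classical
  set L := γ.sort (· ≤ ·) with hL
  have hLlt : L.Pairwise (· < ·) := (Finset.sortedLT_sort γ).pairwise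
  have hLle : L.Pairwise (· ≤ ·) := Finset.pairwise_sort γ _
  by_cases hne : (γ.filter (· ≤ c)).Nonempty
  · -- bumping case
    set m := (γ.filter (· ≤ c)).max' hne with hm
    have hmγ : m ∈ γ := (Finset.mem_filter.1 ((γ.filter (· ≤ c)).max'_mem hne)).1
    have hmc : m ≤ c := (Finset.mem_filter.1 ((γ.filter (· ≤ c)).max'_mem hne)).2
    have hmax : ∀ x ∈ γ, x ≤ c → x ≤ m := fun x hx hxc =>
      Finset.le_max' _ x (by simp only [Finset.mem_filter]; exact ⟨hx, hxc⟩)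
    set T := L.takeWhile (fun x => decide (x ≤ c)) with hT
    set D := L.dropWhile (fun x => decide (x ≤ c)) with hD
    have hTD : T ++ D = L := List.takeWhile_append_dropWhile ..
    have hTle : ∀ x ∈ T, x ≤ c := fun x hx => by
      simpa using List.mem_takeWhile_imp hx
    have hDgt : ∀ x ∈ D, c < x := by
      intro x hx
      have hDs : D.Pairwise (· < ·) := hLlt.sublist (List.dropWhile_sublist _)
      obtain ⟨d, D', hdD⟩ : ∃ d D', D = d :: D' := by
        cases hE : D with
        | nil => rw [hE] at hx; simp at hx
        | cons a b => exact ⟨a, b, rfl⟩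
      have hd : ¬ d ≤ c := by
        have h2 := List.head?_dropWhile_not (fun x => decide (x ≤ c)) L
        rw [← hD, hdD] at h2
        simpa using h2
      rcases List.mem_cons.1 (hdD ▸ hx : x ∈ d :: D') with h | h
      · exact h ▸ lt_of_not_ge hd
      · exact (lt_of_not_ge hd).trans (List.rel_of_pairwise_cons (hdD ▸ hDs) h)
    have hTlt : T.Pairwise (· < ·) := hLlt.sublist (List.takeWhile_sublist _)
    have hTne : T ≠ [] := by
      have hmL : m ∈ L := (Finset.mem_sort _).2 hmγ
      rcases List.mem_append.1 (hTD ▸ hmL : m ∈ T ++ D) with h | h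
      · intro hTe; rw [hTe] at h; simp at h
      · exact absurd (hDgt m h) (not_lt.2 hmc)
    have hgm : T.getLast hTne = m := by
      have hgT : T.getLast hTne ∈ T := List.getLast_mem hTne
      have hgγ : T.getLast hTne ∈ γ :=
        (Finset.mem_sort _).1 ((hTD ▸ (List.mem_append.2 (Or.inl hgT)) : T.getLast hTne ∈ L))
      have hmT : m ∈ T := by
        have hmL : m ∈ L := (Finset.mem_sort _).2 hmγ
        rcases List.mem_append.1 (hTD ▸ hmL : m ∈ T ++ D) with h | h
        · exact h
        · exact absurd (hDgt m h) (not_lt.2 hmc)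
      exact le_antisymm (hmax _ hgγ (hTle _ hgT))
        (le_getLast_of_sorted (hTlt.imp le_of_lt) hmT hTne)
    have hTsplit : T = T.dropLast ++ [m] := by
      conv_lhs => rw [← List.dropLast_append_getLast hTne]
      rw [hgm]
    -- the sorted list of `rIns γ c`
    have hcErase : c ∉ γ.erase m := by
      intro hc
      have hcγ : c ∈ γ := Finset.mem_of_mem_erase hc
      have : c = m := le_antisymm (hmax c hcγ le_rfl) hmc
      exact (Finset.ne_of_mem_erase hc) this
    have hperm : List.Perm ((rIns γ c).sort (· ≤ ·)) (T.dropLast ++ c :: D) := by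
      have h1 : List.Perm ((rIns γ c).sort (· ≤ ·)) (c :: (γ.erase m).toList) := by
        rw [rIns, dif_pos hne, ← hm]
        exact (Finset.sort_perm_toList _ _).trans (Finset.toList_insert hcErase)
      have h2 : List.Perm (m :: (γ.erase m).toList : List A) (m :: (T.dropLast ++ D)) := by
        have e : insert m (γ.erase m) = γ := Finset.insert_erase hmγ
        have p1 : List.Perm (m :: (γ.erase m).toList : List A) γ.toList :=
          ((Finset.toList_insert (Finset.notMem_erase m γ)).symm).trans
            (by rw [e])
        have p2 : List.Perm γ.toList (m :: (T.dropLast ++ D)) := by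
          refine ((Finset.sort_perm_toList γ (· ≤ ·)).symm).trans ?_
          rw [show γ.sort (· ≤ ·) = T.dropLast ++ ([m] ++ D) by
            rw [← hL, ← hTD]; conv_lhs => rw [hTsplit]
            simp]
          exact List.perm_middle
        exact p1.trans p2
      have h3 : List.Perm (γ.erase m).toList (T.dropLast ++ D) := h2.cons_inv
      exact h1.trans ((h3.cons c).trans List.perm_middle.symm)
    have hsortIns : (rIns γ c).sort (· ≤ ·) = T.dropLast ++ c :: D := by
      refine List.Perm.eq_of_pairwise' (Finset.pairwise_sort _ _) ?_ hperm
      refine List.pairwise_append.2 ⟨(hLle.sublist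
        ((List.dropLast_sublist T).trans (List.takeWhile_sublist _))), ?_, ?_⟩
      · exact List.pairwise_cons.2 ⟨fun b hb => (hDgt b hb).le,
          hLle.sublist (List.dropWhile_sublist _)⟩
      · intro a ha b hb
        have hac : a ≤ c := hTle a ((List.dropLast_sublist T).mem ha)
        rcases List.mem_cons.1 hb with rfl | hb
        · exact hac
        · exact hac.trans (hDgt b hb).le
    -- now the congruence
    set Q := T.dropLast.reverse with hQ
    set Pr := D.reverse with hPr
    have hmQ : List.Pairwise (· > ·) (m :: Q) := by
      have e : (m :: Q : List A) = T.reverse := by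
        conv_rhs => rw [hTsplit]
        simp [hQ]
      rw [e]; exact sorted_reverse_gt hTlt
    have hPrc : List.Pairwise (· > ·) (Pr ++ [c]) := by
      refine List.pairwise_append.2 ⟨sorted_reverse_gt (hLlt.sublist (List.dropWhile_sublist _)),
        List.pairwise_singleton _ _, ?_⟩
      intro a ha b hb
      rcases List.mem_singleton.1 hb with rfl
      exact hDgt a (List.mem_reverse.1 ha)
    have e_left : decWord γ ++ [c] = Pr ++ (m :: (Q ++ [c])) := by
      rw [decWord, ← hL, ← hTD, List.reverse_append]
      conv_lhs => rw [hTsplit]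
      simp [hPr, hQ]
    have e_right : ([m] ++ decWord (rIns γ c) : List A) = m :: (Pr ++ c :: Q) := by
      rw [decWord, hsortIns]
      simp [hPr, hQ]
    refine ⟨[m], ?_⟩
    rw [show decWord γ ++ [c] = Pr ++ (m :: (Q ++ [c])) from e_left,
      show ([m] ++ decWord (rIns γ c) : List A) = m :: (Pr ++ c :: Q) from e_right]
    exact (stylCon A).trans (styl_mul_left Pr (moveC Q hmQ hmc)) (moveM Pr Q hPrc hmc)
  · -- appending case
    have hgt : ∀ x ∈ γ, c < x := by
      intro x hx
      by_contra h
      exact hne ⟨x, by simp only [Finset.mem_filter]; exact ⟨hx, not_lt.1 h⟩⟩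
    have hcγ : c ∉ γ := fun h => lt_irrefl c (hgt c h)
    have hsort : (insert c γ).sort (· ≤ ·) = c :: L := by
      apply List.Perm.eq_of_pairwise'
        (Finset.pairwise_sort _ _)
        (List.pairwise_cons.2 ⟨fun b hb => (hgt b (by
          exact (Finset.mem_sort _).1 hb)).le, hLle⟩) ((Finset.sort_perm_toList _ _).trans ?_)
      exact (Finset.toList_insert hcγ).trans ((Finset.sort_perm_toList γ _).symm.cons c)
    refine ⟨[], ?_⟩
    rw [rIns, dif_neg hne]
    simp only [decWord, hsort, List.reverse_cons, List.nil_append]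
    exact (stylCon A).refl _

end Ins


/-- Corollary `gamma-w`: for every word `w` and column `γ`
there is a word `u` with `γw ≡_styl u(γ·w)`. -/
theorem column_word_congr {A : Type*} [LinearOrder A]
    (γ : Finset A) (w : List A) :
    ∃ u : List A,
      stylCon A (ofList (decWord γ ++ w)) (ofList (u ++ decWord (rActW γ w))) := by
  induction w generalizing γ with
  | nil => exact ⟨[], by simp [rActW]; exact (stylCon A).refl _⟩
  | cons c w' ih =>
    obtain ⟨u1, h1⟩ := insert_step γ c
    obtain ⟨u2, h2⟩ := ih (rIns γ c)
    refine ⟨u1 ++ u2, ?_⟩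
    have hact : rActW γ (c :: w') = rActW (rIns γ c) w' := rfl
    have step1 : stylCon A (ofList ((decWord γ ++ [c]) ++ w'))
        (ofList ((u1 ++ decWord (rIns γ c)) ++ w')) := styl_mul_right w' h1
    have step2 : stylCon A (ofList (u1 ++ (decWord (rIns γ c) ++ w')))
        (ofList (u1 ++ (u2 ++ decWord (rActW (rIns γ c) w')))) := styl_mul_left u1 h2
    rw [hact]
    have e1 : decWord γ ++ c :: w' = (decWord γ ++ [c]) ++ w' := by simp
    have e2 : (u1 ++ decWord (rIns γ c)) ++ w' = u1 ++ (decWord (rIns γ c) ++ w') := by simp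
    have e3 : u1 ++ (u2 ++ decWord (rActW (rIns γ c) w')) =
        (u1 ++ u2) ++ decWord (rActW (rIns γ c) w') := by simp
    rw [e1]
    exact (stylCon A).trans step1 (by rw [← e3]; exact e2 ▸ step2)
end
end
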